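/- Let P ⊂ ℝⁿ be a compact convex polytope with nonempty interior containing the origin, let θ be its extremal affine function, and set ℓ(x) := (1 − θ(x))/vol(P). Then ℓ(0) = ∫_P ℓ(x)² dx. In particular ℓ(0) > 0, i.e., θ(0) < 1. -/

import Mathlib

open MeasureTheory

/-- `P ⊆ ℝⁿ` is a (compact convex) polytope: the convex hull of finitely many points. -/
def IsPolytope {n : ℕ} (P : Set (Fin n → ℝ)) : Prop :=
  ∃ V : Finset (Fin n → ℝ), P = convexHull ℝ (V : Set (Fin n → ℝ))

/-- `θ : ℝⁿ → ℝ` is an affine function. -/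
def IsAffineFn {n : ℕ} (θ : (Fin n → ℝ) → ℝ) : Prop :=
  ∃ (a : Fin n → ℝ) (c : ℝ), ∀ x, θ x = (∑ i, a i * x i) + c

/-- `θ` is the extremal affine function of `P`: it is affine, `∫_P θ = 0`, and
`∫_P xᵢ θ = ∫_P xᵢ` for every `i`. -/
def IsExtremalAffine {n : ℕ} (P : Set (Fin n → ℝ)) (θ : (Fin n → ℝ) → ℝ) : Prop :=
  IsAffineFn θ ∧ (∫ x in P, θ x) = 0 ∧
    ∀ i : Fin n, (∫ x in P, x i * θ x) = ∫ x in P, x i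

/-- With `ℓ(x) = (1 - θ(x))/vol(P)`, one has `ℓ(0) = ∫_P ℓ²`; in particular `ℓ(0) > 0`,
i.e. `θ(0) < 1`. -/
theorem extremal_affine_ell_zero {n : ℕ} (P : Set (Fin n → ℝ))
    (hP : IsPolytope P) (hint : (interior P).Nonempty) (h0 : (0 : Fin n → ℝ) ∈ P)
    (θ : (Fin n → ℝ) → ℝ) (hθ : IsExtremalAffine P θ) :
    (1 - θ 0) / (volume P).toReal
        = (∫ x in P, ((1 - θ x) / (volume P).toReal) ^ 2) ∧
    0 < (1 - θ 0) / (volume P).toReal ∧ θ 0 < 1 := by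
  obtain ⟨⟨a, c, ha⟩, hI0, hIi⟩ := hθ
  obtain ⟨Vtx, hPV⟩ := hP
  have hPc : IsCompact P := by
    rw [hPV]; exact Vtx.finite_toSet.isCompact_convexHull ℝ
  have hfin : volume P ≠ ⊤ := hPc.measure_lt_top.ne
  have hpos : 0 < volume P := MeasureTheory.Measure.measure_pos_of_nonempty_interior _ hint
  set V : ℝ := (volume P).toReal with hV
  have hVpos : 0 < V := ENNReal.toReal_pos hpos.ne' hfin
  have hθc : Continuous θ := by
    have h : θ = fun x => (∑ i, a i * x i) + c := funext ha
    rw [h]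
    exact (continuous_finset_sum _ fun i _ => (continuous_const.mul (continuous_apply i))).add continuous_const
  have hintg : ∀ (f : (Fin n → ℝ) → ℝ), Continuous f → IntegrableOn f P := by
    intro f hf
    exact hf.continuousOn.integrableOn_compact hPc
  have hconst : (∫ _x in P, (1:ℝ)) = V := by
    simp [hV, Measure.real]
  -- ∫ θ² = -c * V
  have hxiθ : ∀ i : Fin n, IntegrableOn (fun x => x i * θ x) P :=
    fun i => hintg _ ((continuous_apply i).mul hθc)
  have hθint : IntegrableOn θ P := hintg _ hθc
  have hsum0 : (∑ i, a i * ∫ x in P, x i) = -(c * V) := by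
    have h1 : (∫ x in P, θ x) = (∑ i, a i * ∫ x in P, x i) + c * V := by
      have h2 : (∫ x in P, θ x)
          = (∫ x in P, (∑ i, a i * x i)) + ∫ _x in P, c := by
        rw [← integral_add]
        · exact integral_congr_ae (Filter.Eventually.of_forall fun x => ha x)
        · exact hintg _ (continuous_finset_sum _ fun i _ => (continuous_const.mul (continuous_apply i)))
        · exact hintg _ continuous_const
      rw [h2, integral_finset_sum]
      · simp only [integral_const_mul]
        congr 1
        simp [hV, mul_comm, Measure.real]
      · intro i _
        exact hintg _ (continuous_const.mul (continuous_apply i))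
    rw [hI0] at h1
    linarith
  have hθsq : (∫ x in P, θ x ^ 2) = -(c * V) := by
    have h2 : (∫ x in P, θ x ^ 2)
        = (∫ x in P, (∑ i, a i * (x i * θ x))) + ∫ x in P, c * θ x := by
      rw [← integral_add]
      · apply integral_congr_ae (Filter.Eventually.of_forall fun x => ?_)
        rw [pow_two]; nth_rewrite 1 [ha x]
        rw [add_mul, Finset.sum_mul]
        congr 1
        exact Finset.sum_congr rfl fun i _ => by ring
      · apply integrable_finset_sum
        intro i _
        exact (hxiθ i).const_mul _
      · exact hθint.const_mul _
    rw [h2, integral_finset_sum _ (fun i _ => (hxiθ i).const_mul _)]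
    simp only [integral_const_mul, hIi, hI0, mul_zero, add_zero]
    exact hsum0
  -- main computation of ∫ (1-θ)²
  have hkey : (∫ x in P, (1 - θ x) ^ 2) = (1 - c) * V := by
    have h2 : (∫ x in P, (1 - θ x) ^ 2)
        = (∫ x in P, ((1:ℝ) - 2 * θ x)) + ∫ x in P, θ x ^ 2 := by
      rw [← integral_add]
      · apply integral_congr_ae (Filter.Eventually.of_forall fun x => ?_)
        ring
      · exact (hintg _ continuous_const).sub (hθint.const_mul _)
      · exact hintg _ (hθc.pow 2)
    rw [h2, integral_sub (hintg _ continuous_const) (hθint.const_mul _),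
      integral_const_mul, hI0, hconst, hθsq]
    ring
  have hθ0 : θ 0 = c := by simp [ha]
  have hmain : (1 - θ 0) / V = ∫ x in P, ((1 - θ x) / V) ^ 2 := by
    have h3 : (∫ x in P, ((1 - θ x) / V) ^ 2)
        = (∫ x in P, (1 - θ x) ^ 2) / V ^ 2 := by
      rw [← integral_div]
      apply integral_congr_ae (Filter.Eventually.of_forall fun x => ?_)
      ring
    rw [h3, hkey, hθ0]
    field_simp
  have hL1 : (∫ x in P, (1 - θ x) / V) = 1 := by
    rw [integral_div, integral_sub (hintg _ continuous_const) hθint, hI0,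
      hconst]
    field_simp
    simp
  have hLpos : 0 < ∫ x in P, ((1 - θ x) / V) ^ 2 := by
    rw [integral_pos_iff_support_of_nonneg]
    · rw [pos_iff_ne_zero]
      intro hz
      have hsupp : Function.support (fun x => ((1 - θ x) / V) ^ 2)
          = Function.support (fun x => (1 - θ x) / V) := by
        ext x
        simp [Function.mem_support, pow_eq_zero_iff]
      have hae : ∀ᵐ x ∂(volume.restrict P), (1 - θ x) / V = 0 := by
        rw [MeasureTheory.ae_iff]
        convert hz using 2
        rw [hsupp]
        rfl
      have h0' : (∫ x in P, (1 - θ x) / V) = 0 := integral_eq_zero_of_ae hae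
      rw [hL1] at h0'
      norm_num at h0'
    · intro x
      positivity
    · exact hintg _ (((continuous_const.sub hθc).div_const _).pow 2)
  have hpos2 : 0 < (1 - θ 0) / V := hmain ▸ hLpos
  refine ⟨hmain, hpos2, ?_⟩
  have h1c : 0 < 1 - θ 0 := by
    by_contra h
    push_neg at h
    have : (1 - θ 0) / V ≤ 0 := div_nonpos_of_nonpos_of_nonneg h hVpos.le
    linarith
  linarith
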